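/- There exist bounded linear operators A and B on the Hilbert space ℓ²(ℕ) such that A is self-adjoint (hence normal), both AB and BA are hyponormal, but AA*B ≠ BAA*. Concretely, one may take A the diagonal operator Aeₙ = αₙeₙ with (αₙ) a bounded increasing sequence of nonnegative reals satisfying α₁ ≠ α₂, and B the unilateral shift Beₙ = e_{n+1} on the standard orthonormal basis (eₙ). -/

import Mathlib

open ContinuousLinearMap

open scoped ENNReal

/-- The Hilbert space `ℓ²(ℕ)` of square-summable complex sequences. -/
noncomputable abbrev ellTwo : Type := lp (fun _ : ℕ => ℂ) 2

/-- The standard orthonormal basis of `ℓ²(ℕ)`. -/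
noncomputable def stdBasis (n : ℕ) : ellTwo := lp.single 2 n 1

/-- A bounded operator `T` is *hyponormal* if `‖T* x‖ ≤ ‖T x‖` for all `x`. -/
def IsHyponormalOp {H : Type*} [NormedAddCommGroup H] [InnerProductSpace ℂ H] [CompleteSpace H]
    (T : H →L[ℂ] H) : Prop :=
  ∀ x : H, ‖adjoint T x‖ ≤ ‖T x‖

noncomputable section Aux

/-- the diagonal weights -/
def al : ℕ → ℝ := fun n => if n = 0 then 0 else 1

lemma al_nonneg (n : ℕ) : 0 ≤ al n := by unfold al; split <;> norm_num

lemma al_le_one (n : ℕ) : al n ≤ 1 := by unfold al; split <;> norm_num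

lemma al_mono : Monotone al := by
  intro n m h
  unfold al
  split
  · exact al_nonneg m
  · split
    · omega
    · exact le_refl 1

lemma hp2 : (0:ℝ) < (2 : ℝ≥0∞).toReal := by norm_num

/-- forward shift on sequences -/
def shiftFun (x : ℕ → ℂ) : ℕ → ℂ := fun n => match n with
  | 0 => 0
  | Nat.succ k => x k

/-- backward shift on sequences -/
def bshiftFun (x : ℕ → ℂ) : ℕ → ℂ := fun n => x (n + 1)

/-- diagonal on sequences -/
def diagFun (x : ℕ → ℂ) : ℕ → ℂ := fun n => (al n : ℂ) * x n

lemma summable_coords (x : ellTwo) :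
    Summable fun n => ‖(x : ∀ _ : ℕ, ℂ) n‖ ^ (2 : ℝ≥0∞).toReal :=
  (lp.memℓp x).summable hp2

lemma mem_shift (x : ellTwo) : Memℓp (shiftFun x) 2 := by
  apply memℓp_gen
  exact (summable_nat_add_iff 1).1 (summable_coords x)

lemma mem_bshift (x : ellTwo) : Memℓp (bshiftFun x) 2 := by
  apply memℓp_gen
  exact (summable_nat_add_iff 1).2 (summable_coords x)

lemma norm_coord_diag_le (m : ℕ) (c : ℂ) : ‖(al m : ℂ) * c‖ ≤ ‖c‖ := by
  rw [norm_mul, Complex.norm_real, Real.norm_eq_abs]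
  calc |al m| * ‖c‖ ≤ 1 * ‖c‖ := by
        apply mul_le_mul_of_nonneg_right _ (norm_nonneg c)
        rw [abs_of_nonneg (al_nonneg m)]; exact al_le_one m
    _ = ‖c‖ := one_mul _

lemma norm_coord_mono (m : ℕ) (c : ℂ) : ‖(al m : ℂ) * c‖ ≤ ‖(al (m+1) : ℂ) * c‖ := by
  rw [norm_mul, norm_mul, Complex.norm_real, Complex.norm_real, Real.norm_eq_abs,
    Real.norm_eq_abs, abs_of_nonneg (al_nonneg m), abs_of_nonneg (al_nonneg (m+1))]
  exact mul_le_mul_of_nonneg_right (al_mono (Nat.le_succ m)) (norm_nonneg c)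

lemma mem_diag (x : ellTwo) : Memℓp (diagFun x) 2 := by
  apply memℓp_gen
  refine Summable.of_nonneg_of_le (fun n => Real.rpow_nonneg (norm_nonneg _) _)
    (fun n => Real.rpow_le_rpow (norm_nonneg _) (norm_coord_diag_le n _) hp2.le)
    (summable_coords x)

lemma shiftFun_add (x y : ℕ → ℂ) : shiftFun (x + y) = shiftFun x + shiftFun y := by
  funext n; cases n <;> simp [shiftFun]

lemma shiftFun_smul (c : ℂ) (x : ℕ → ℂ) : shiftFun (c • x) = c • shiftFun x := by
  funext n; cases n <;> simp [shiftFun]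

/-- key comparison lemma -/
lemma ell2_norm_le (u v : ellTwo) (e : ℕ → ℕ) (he : Function.Injective e)
    (h : ∀ n, ‖(u : ∀ _ : ℕ, ℂ) n‖ ≤ ‖(v : ∀ _ : ℕ, ℂ) (e n)‖) : ‖u‖ ≤ ‖v‖ := by
  rw [← Real.rpow_le_rpow_iff (lp.norm_nonneg' u) (lp.norm_nonneg' v) hp2,
    lp.norm_rpow_eq_tsum hp2, lp.norm_rpow_eq_tsum hp2]
  exact Summable.tsum_le_tsum_of_inj e he (fun c _ => Real.rpow_nonneg (norm_nonneg _) _)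
    (fun n => Real.rpow_le_rpow (norm_nonneg _) (h n) hp2.le)
    (summable_coords u) (summable_coords v)

/-- the diagonal operator -/
def Aop : ellTwo →L[ℂ] ellTwo :=
  LinearMap.mkContinuous
    { toFun := fun x => ⟨diagFun x, mem_diag x⟩
      map_add' := fun x y => by
        apply lp.ext; funext n
        show (al n : ℂ) * (x + y : ellTwo) n = _
        rw [lp.coeFn_add, Pi.add_apply, mul_add]
        rfl
      map_smul' := fun c x => by
        apply lp.ext; funext n
        show (al n : ℂ) * (c • x : ellTwo) n = _
        rw [lp.coeFn_smul, Pi.smul_apply, smul_eq_mul]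
        show _ = c • ((al n : ℂ) * (x : ∀ _ : ℕ, ℂ) n)
        rw [smul_eq_mul]; ring }
    1
    (by
      intro x
      rw [one_mul]
      exact ell2_norm_le _ x id Function.injective_id fun n => norm_coord_diag_le n _)

/-- the forward shift operator -/
def Bop : ellTwo →L[ℂ] ellTwo :=
  LinearMap.mkContinuous
    { toFun := fun x => ⟨shiftFun x, mem_shift x⟩
      map_add' := fun x y => by
        apply lp.ext
        show shiftFun (x + y : ellTwo) = _
        rw [lp.coeFn_add, shiftFun_add]
        rfl
      map_smul' := fun c x => by
        apply lp.ext
        show shiftFun (c • x : ellTwo) = _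
        rw [lp.coeFn_smul, shiftFun_smul]
        rfl }
    1
    (by
      intro x
      rw [one_mul]
      show ‖(⟨shiftFun x, mem_shift x⟩ : ellTwo)‖ ≤ ‖x‖
      rw [← Real.rpow_le_rpow_iff (lp.norm_nonneg' _) (lp.norm_nonneg' x) hp2,
        lp.norm_rpow_eq_tsum hp2, lp.norm_rpow_eq_tsum hp2,
        Summable.tsum_eq_zero_add (summable_coords (⟨shiftFun x, mem_shift x⟩ : ellTwo))]
      have h0 : ‖shiftFun (x : ∀ _ : ℕ, ℂ) 0‖ ^ (2 : ℝ≥0∞).toReal = 0 := by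
        show ‖(0:ℂ)‖ ^ (2 : ℝ≥0∞).toReal = 0
        rw [norm_zero, Real.zero_rpow hp2.ne']
      calc ‖shiftFun (x : ∀ _ : ℕ, ℂ) 0‖ ^ (2 : ℝ≥0∞).toReal
            + ∑' n : ℕ, ‖shiftFun (x : ∀ _ : ℕ, ℂ) (n + 1)‖ ^ (2 : ℝ≥0∞).toReal
          = ∑' n : ℕ, ‖(x : ∀ _ : ℕ, ℂ) n‖ ^ (2 : ℝ≥0∞).toReal := by
            rw [h0, zero_add]
            exact tsum_congr fun n => rfl
        _ ≤ _ := le_refl _)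

/-- the backward shift operator -/
def Sop : ellTwo →L[ℂ] ellTwo :=
  LinearMap.mkContinuous
    { toFun := fun x => ⟨bshiftFun x, mem_bshift x⟩
      map_add' := fun x y => by
        apply lp.ext; funext n
        show (x + y : ellTwo) (n + 1) = _
        rw [lp.coeFn_add, Pi.add_apply]
        rfl
      map_smul' := fun c x => by
        apply lp.ext; funext n
        show (c • x : ellTwo) (n + 1) = _
        rw [lp.coeFn_smul, Pi.smul_apply]
        rfl }
    1
    (by
      intro x
      rw [one_mul]
      exact ell2_norm_le _ x Nat.succ Nat.succ_injective fun n => le_refl _)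

lemma Aop_coe (x : ellTwo) : ((Aop x : ellTwo) : ∀ _ : ℕ, ℂ) = diagFun x := rfl
lemma Bop_coe (x : ellTwo) : ((Bop x : ellTwo) : ∀ _ : ℕ, ℂ) = shiftFun x := rfl
lemma Sop_coe (x : ellTwo) : ((Sop x : ellTwo) : ∀ _ : ℕ, ℂ) = bshiftFun x := rfl

lemma adjoint_Aop : adjoint Aop = Aop := by
  symm
  rw [eq_adjoint_iff]
  intro x y
  rw [lp.inner_eq_tsum, lp.inner_eq_tsum]
  refine tsum_congr fun n => ?_
  simp only [Aop_coe, diagFun, RCLike.inner_apply, map_mul, Complex.conj_ofReal]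
  ring

lemma adjoint_Bop : adjoint Bop = Sop := by
  symm
  rw [eq_adjoint_iff]
  intro x y
  rw [lp.inner_eq_tsum, lp.inner_eq_tsum,
    Summable.tsum_eq_zero_add (lp.summable_inner (𝕜 := ℂ) x (Bop y))]
  simp only [Bop_coe, Sop_coe, bshiftFun, shiftFun, RCLike.inner_apply]
  simp

lemma stdBasis_apply (n m : ℕ) : (stdBasis n : ∀ _ : ℕ, ℂ) m = if m = n then 1 else 0 := by
  by_cases h : m = n
  · subst h; simp [stdBasis, lp.single_apply_self]
  · simp [stdBasis, lp.single_apply_ne _ _ _ h, h]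

lemma Bop_stdBasis (n : ℕ) : Bop (stdBasis n) = stdBasis (n + 1) := by
  apply lp.ext; funext m
  rw [Bop_coe]
  cases m with
  | zero => simp [shiftFun, stdBasis_apply]
  | succ k =>
      show (stdBasis n : ∀ _ : ℕ, ℂ) k = _
      rw [stdBasis_apply, stdBasis_apply]
      simp

lemma Aop_stdBasis (n : ℕ) : Aop (stdBasis n) = (al n : ℂ) • stdBasis n := by
  apply lp.ext; funext m
  rw [Aop_coe, lp.coeFn_smul, Pi.smul_apply, smul_eq_mul]
  show (al m : ℂ) * (stdBasis n : ∀ _ : ℕ, ℂ) m = _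
  rw [stdBasis_apply]
  by_cases h : m = n
  · subst h; simp
  · simp [h]

lemma stdBasis_ne_zero (n : ℕ) : stdBasis n ≠ 0 := by
  intro h
  have h1 : (stdBasis n : ∀ _ : ℕ, ℂ) n = 0 := by rw [h]; rfl
  rw [stdBasis_apply] at h1
  simp at h1

end Aux

/-- There are bounded operators `A`, `B` on `ℓ²(ℕ)` with `A` self-adjoint (hence normal),
both products `AB` and `BA` hyponormal, but `A A* B ≠ B A A*`: one may take `A` diagonal
with a bounded increasing sequence `(αₙ)` of nonnegative reals with `α₁ ≠ α₂`, and `B`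
the unilateral shift. -/
theorem exists_counterexample :
    ∃ (α : ℕ → ℝ) (A B : ellTwo →L[ℂ] ellTwo),
      (∀ n, 0 ≤ α n) ∧ Monotone α ∧ BddAbove (Set.range α) ∧ α 0 ≠ α 1 ∧
      (∀ n, A (stdBasis n) = (α n : ℂ) • stdBasis n) ∧
      (∀ n, B (stdBasis n) = stdBasis (n + 1)) ∧
      IsSelfAdjoint A ∧
      IsHyponormalOp (A * B) ∧ IsHyponormalOp (B * A) ∧
      A * adjoint A * B ≠ B * (A * adjoint A) := by
  refine ⟨al, Aop, Bop, al_nonneg, al_mono, ⟨1, ?_⟩, ?_, Aop_stdBasis, Bop_stdBasis, ?_, ?_, ?_, ?_⟩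
  · rintro _ ⟨n, rfl⟩; exact al_le_one n
  · simp [al]
  · exact isSelfAdjoint_iff'.2 adjoint_Aop
  · -- AB hyponormal
    intro x
    have hadj : adjoint (Aop * Bop) = Sop * Aop := by
      show adjoint (Aop ∘L Bop) = _
      rw [adjoint_comp, adjoint_Aop, adjoint_Bop]; rfl
    rw [hadj]
    refine ell2_norm_le _ _ (fun n => n + 2) (fun a b h => by simpa using h) fun n => ?_
    show ‖bshiftFun (diagFun x) n‖ ≤ ‖diagFun (shiftFun x) (n + 2)‖
    show ‖(al (n+1) : ℂ) * (x : ∀ _ : ℕ, ℂ) (n+1)‖ ≤ ‖(al (n+2) : ℂ) * (x : ∀ _ : ℕ, ℂ) (n+1)‖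
    exact norm_coord_mono (n+1) _
  · -- BA hyponormal
    intro x
    have hadj : adjoint (Bop * Aop) = Aop * Sop := by
      show adjoint (Bop ∘L Aop) = _
      rw [adjoint_comp, adjoint_Aop, adjoint_Bop]; rfl
    rw [hadj]
    refine ell2_norm_le _ _ (fun n => n + 2) (fun a b h => by simpa using h) fun n => ?_
    show ‖diagFun (bshiftFun x) n‖ ≤ ‖shiftFun (diagFun x) (n + 2)‖
    show ‖(al n : ℂ) * (x : ∀ _ : ℕ, ℂ) (n+1)‖ ≤ ‖(al (n+1) : ℂ) * (x : ∀ _ : ℕ, ℂ) (n+1)‖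
    exact norm_coord_mono n _
  · -- inequality
    rw [adjoint_Aop]
    intro h
    have h0 := congrArg (fun T : ellTwo →L[ℂ] ellTwo => T (stdBasis 0)) h
    simp only [ContinuousLinearMap.mul_apply] at h0
    rw [Bop_stdBasis, Aop_stdBasis, map_smul, Aop_stdBasis] at h0
    rw [Aop_stdBasis, show al 0 = 0 from rfl] at h0
    simp only [Complex.ofReal_zero, zero_smul, map_zero] at h0
    rw [show al 1 = 1 from rfl] at h0
    simp only [Complex.ofReal_one, one_smul, smul_smul, one_mul] at h0
    exact stdBasis_ne_zero 1 h0
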